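/- Let A be a real central hyperplane arrangement with fundamental chamber c₀ (on the positive side of all hyperplanes). A subset I ⊆ A is 2-closed if and only if there is no circuit v of A with |v⁻¹(+)| = 2, |v⁻¹(−)| = 1, v⁻¹(+) ⊆ I, and v⁻¹(−) ⊆ A − I. -/

import Mathlib

open Matrix
open scoped Classical

/-- Ambient space: `ℝⁿ`. -/
abbrev V (n : ℕ) := Fin n → ℝ

/-- The linear functional `x ↦ v ⬝ᵥ x` determined by a normal vector. -/
def hypl {n : ℕ} (v : V n) : V n →ₗ[ℝ] ℝ where
  toFun x := v ⬝ᵥ x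
  map_add' x y := by simp [dotProduct_add]
  map_smul' c x := by simp [dotProduct_smul]

/-- Two normal vectors define the same hyperplane. -/
def SameHyp {n : ℕ} (u w : V n) : Prop := ∀ x, u ⬝ᵥ x = 0 ↔ w ⬝ᵥ x = 0

/-- A finite set of normal vectors represents a (central) hyperplane arrangement
if each normal is nonzero and distinct normals define distinct hyperplanes. -/
def IsArrangement {n : ℕ} (A : Finset (V n)) : Prop :=
  (∀ v ∈ A, v ≠ 0) ∧ ∀ u ∈ A, ∀ w ∈ A, SameHyp u w → u = w

/-- The point `x` realizes the sign vector `c` on the arrangement `A`. -/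
def Realizes {n : ℕ} (A : Finset (V n)) (c : V n → Bool) (x : V n) : Prop :=
  ∀ v ∈ A, if c v then 0 < v ⬝ᵥ x else v ⬝ᵥ x < 0

/-- A chamber of `A`, encoded by its sign vector. -/
def IsChamber {n : ℕ} (A : Finset (V n)) (c : V n → Bool) : Prop :=
  ∃ x, Realizes A c x

/-- The separation set of two chambers: hyperplanes on which their signs differ. -/
noncomputable def SepSet {n : ℕ} (A : Finset (V n)) (c d : V n → Bool) : Finset (V n) :=
  A.filter (fun v => c v ≠ d v)

/-- The localization of `A` at the subspace `ker u ∩ ker w`: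
hyperplanes containing this subspace. -/
noncomputable def loc {n : ℕ} (A : Finset (V n)) (u w : V n) : Finset (V n) :=
  A.filter (fun v => ∀ x, u ⬝ᵥ x = 0 → w ⬝ᵥ x = 0 → v ⬝ᵥ x = 0)

/-- `u, w` span a codimension-2 intersection subspace `ker u ∩ ker w` of `A`. -/
def Codim2 {n : ℕ} (A : Finset (V n)) (u w : V n) : Prop :=
  u ∈ A ∧ w ∈ A ∧ LinearIndependent ℝ ![u, w]

/-- `I` is biclosed w.r.t. the chamber `c₀`: its intersection with each rank-2
localization is the separation set of some chamber of the localization. -/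
def IsBiclosed {n : ℕ} (A : Finset (V n)) (c₀ : V n → Bool) (I : Finset (V n)) : Prop :=
  ∀ u w, Codim2 A u w →
    ∃ d, IsChamber (loc A u w) d ∧ I ∩ loc A u w = SepSet (loc A u w) c₀ d

/-- `I ⊆ A` is convex with respect to `c₀`. -/
def IsConvex {n : ℕ} (A : Finset (V n)) (c₀ : V n → Bool) (I : Finset (V n)) : Prop :=
  ∀ H ∈ A \ I, ∃ e, IsChamber A e ∧ H ∈ SepSet A c₀ e ∧ SepSet A c₀ e ⊆ A \ I

/-- `I` is 2-closed: its intersection with each rank-2 localization is convex there. -/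
def Is2Closed {n : ℕ} (A : Finset (V n)) (c₀ : V n → Bool) (I : Finset (V n)) : Prop :=
  ∀ u w, Codim2 A u w → IsConvex (loc A u w) c₀ (I ∩ loc A u w)

/-- `v` is a wall of the chamber `c`: some point of the closure of `c` lies on the
hyperplane of `v` and strictly off every other hyperplane of `A`. -/
def IsWall {n : ℕ} (A : Finset (V n)) (c : V n → Bool) (v : V n) : Prop :=
  v ∈ A ∧ ∃ x, v ⬝ᵥ x = 0 ∧ ∀ w ∈ A, ¬ SameHyp v w →
    (if c w then 0 < w ⬝ᵥ x else w ⬝ᵥ x < 0)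

/-- The sign vector `v` is feasible: some point satisfies all its strict constraints. -/
def Feasible {n : ℕ} (A : Finset (V n)) (v : V n → SignType) : Prop :=
  ∃ x : V n, ∀ h ∈ A, (v h = 1 → 0 < h ⬝ᵥ x) ∧ (v h = -1 → h ⬝ᵥ x < 0)

/-- A circuit of `A`: a minimal nonzero infeasible sign vector supported on `A`. -/
def IsCircuit {n : ℕ} (A : Finset (V n)) (v : V n → SignType) : Prop :=
  (∀ h, v h ≠ 0 → h ∈ A) ∧ (∃ h, v h ≠ 0) ∧ ¬ Feasible A v ∧
    ∀ w : V n → SignType, (∀ h, w h ≠ 0 → w h = v h) →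
      {h | w h ≠ 0} ⊂ {h | v h ≠ 0} → Feasible A w

/-- A reduced gallery from `c₀` to `-c₀` in `A`, crossing hyperplanes `H 0, H 1, …`
in order. -/
def IsGallery {n N : ℕ} (A : Finset (V n)) (c₀ : V n → Bool) (H : Fin N → V n)
    (d : Fin (N + 1) → V n → Bool) : Prop :=
  (∀ i, IsChamber A (d i)) ∧ d 0 = c₀ ∧ (∀ v ∈ A, d (Fin.last N) v = !c₀ v) ∧
    ∀ i : Fin N, SepSet A (d i.castSucc) (d i.succ) = {H i}

/-- The enumeration `H` of `A` is admissible: on every rank-2 localization, the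
induced order is the crossing order of some reduced gallery of the localization. -/
def Admissible {n N : ℕ} (A : Finset (V n)) (c₀ : V n → Bool) (H : Fin N → V n) : Prop :=
  ∀ u w, Codim2 A u w →
    ∃ (M : ℕ) (G : Fin M → V n) (e : Fin (M + 1) → V n → Bool) (φ : Fin M → Fin N),
      IsGallery (loc A u w) c₀ G e ∧ StrictMono φ ∧ ∀ k, G k = H (φ k)

/-- The intersection lattice of `A`, as a set of subspaces of `ℝⁿ`. -/
def InterLattice {n : ℕ} (A : Finset (V n)) : Set (Submodule ℝ (V n)) :=
  {X | ∃ S : Finset (V n), S ⊆ A ∧ X = S.inf (fun v => LinearMap.ker (hypl v))}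

/-- A modular element of the intersection lattice of `A`. -/
def IsModular {n : ℕ} (A : Finset (V n)) (X : Submodule ℝ (V n)) : Prop :=
  X ∈ InterLattice A ∧ ∀ Y ∈ InterLattice A, X ⊔ Y ∈ InterLattice A

/-- The rank of the arrangement `A`. -/
noncomputable def rankA {n : ℕ} (A : Finset (V n)) : ℕ :=
  Module.finrank ℝ (Submodule.span ℝ (A : Set (V n)))

/-- A modular flag: a maximal chain `⊤ = X 0 > X 1 > ⋯ > X r` of modular
elements of the intersection lattice, with `X i` of codimension `i`. -/
def IsModularFlag {n : ℕ} (A : Finset (V n)) (X : Fin (rankA A + 1) → Submodule ℝ (V n)) : Prop :=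
  X 0 = ⊤ ∧ (∀ i, IsModular A (X i)) ∧ (∀ i j, i ≤ j → X j ≤ X i) ∧
    ∀ i : Fin (rankA A + 1), Module.finrank ℝ (X i) = n - (i : ℕ)

/-- `A` is supersolvable: its intersection lattice has a modular flag. -/
def IsSupersolvable {n : ℕ} (A : Finset (V n)) : Prop :=
  ∃ X : Fin (rankA A + 1) → Submodule ℝ (V n), IsModularFlag A X

/-- The chamber `c` is incident to the subspace `X`:  some point of `X` lies in the
closure of `c` and strictly off every hyperplane of `A` not containing `X`. -/
def IncidentSub {n : ℕ} (A : Finset (V n)) (c : V n → Bool) (X : Submodule ℝ (V n)) : Prop :=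
  ∃ x, x ∈ X ∧ ∀ v ∈ A, ¬ X ≤ LinearMap.ker (hypl v) →
    (if c v then 0 < v ⬝ᵥ x else v ⬝ᵥ x < 0)

/-- The chamber `c` is incident to the codimension-2 subspace `ker u ∩ ker w`. -/
def IncidentLoc {n : ℕ} (A : Finset (V n)) (c : V n → Bool) (u w : V n) : Prop :=
  ∃ x, (∀ v ∈ loc A u w, v ⬝ᵥ x = 0) ∧ ∀ v ∈ A, v ∉ loc A u w →
    (if c v then 0 < v ⬝ᵥ x else v ⬝ᵥ x < 0)

/-- `(A, c₀)` is bineighborly: any chamber is incident to the intersection of any two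
of its walls separating it from `-c₀`. -/
def Bineighborly {n : ℕ} (A : Finset (V n)) (c₀ : V n → Bool) : Prop :=
  ∀ c, IsChamber A c → ∀ u w, IsWall A c u → IsWall A c w →
    u ∈ SepSet A c (fun v => !c₀ v) → w ∈ SepSet A c (fun v => !c₀ v) → IncidentLoc A c u w

/-- Every chamber of `A` is a simplicial cone: its walls are linearly independent
and span the same subspace as `A`. -/
def IsSimplicial {n : ℕ} (A : Finset (V n)) : Prop :=
  ∀ c, IsChamber A c →
    LinearIndependent ℝ ((↑) : {v // IsWall A c v} → V n) ∧
      Submodule.span ℝ {v | IsWall A c v} = Submodule.span ℝ (A : Set (V n))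

section Helpers
variable {n : ℕ}

lemma dot_self_pos {v : V n} (hv : v ≠ 0) : 0 < v ⬝ᵥ v := by
  have h0 : v ⬝ᵥ v ≠ 0 := fun h => hv (dotProduct_self_eq_zero.1 h)
  have h1 : 0 ≤ v ⬝ᵥ v := Finset.sum_nonneg fun i _ => mul_self_nonneg _
  exact lt_of_le_of_ne h1 (Ne.symm h0)

lemma sum_dot {ι : Type*} (s : Finset ι) (f : ι → V n) (v : V n) :
    (∑ i ∈ s, f i) ⬝ᵥ v = ∑ i ∈ s, f i ⬝ᵥ v := by
  rw [dotProduct_comm]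
  rw [show v ⬝ᵥ (∑ i ∈ s, f i) = hypl v (∑ i ∈ s, f i) from rfl, map_sum]
  exact Finset.sum_congr rfl fun i _ => dotProduct_comm v (f i)

lemma smul_sameHyp {a b : V n} {c : ℝ} (hc : c ≠ 0) (h : b = c • a) : SameHyp a b := by
  intro x
  rw [h, smul_dotProduct, smul_eq_mul, mul_eq_zero]
  exact ⟨fun h' => Or.inr h', fun h' => h'.resolve_left hc⟩

lemma eq_of_arr {A : Finset (V n)} (hA : IsArrangement A) {a b : V n} (ha : a ∈ A)
    (hb : b ∈ A) {c : ℝ} (hc : c ≠ 0) (h : b = c • a) : a = b :=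
  hA.2 a ha b hb (smul_sameHyp hc h)

lemma not_prop {A : Finset (V n)} (hA : IsArrangement A) {a b : V n} (haA : a ∈ A)
    (hbA : b ∈ A) (hab : a ≠ b) : ∀ c : ℝ, b ≠ c • a := by
  intro c hc
  rcases eq_or_ne c 0 with rfl | hc0
  · exact hA.1 b hbA (by simpa using hc)
  · exact hab (eq_of_arr hA haA hbA hc0 hc)

lemma vec_eq_of_dot {a b : V n} (h : ∀ x, a ⬝ᵥ x = b ⬝ᵥ x) : a = b := by
  funext i
  have := h (Pi.single i 1)
  rwa [dotProduct_single, dotProduct_single, mul_one, mul_one] at this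

lemma mem_span_pair_of_ker {u w h : V n}
    (hk : ∀ x, u ⬝ᵥ x = 0 → w ⬝ᵥ x = 0 → h ⬝ᵥ x = 0) :
    ∃ a b : ℝ, h = a • u + b • w := by
  have hker : ⨅ i : Fin 2, LinearMap.ker (![hypl u, hypl w] i) ≤ LinearMap.ker (hypl h) := by
    intro x hx
    simp only [Submodule.mem_iInf, LinearMap.mem_ker] at hx ⊢
    exact hk x (hx 0) (hx 1)
  have hm := mem_span_of_iInf_ker_le_ker (𝕜 := ℝ) (L := ![hypl u, hypl w]) (K := hypl h) hker
  rw [Submodule.mem_span_range_iff_exists_fun] at hm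
  obtain ⟨c, hc⟩ := hm
  rw [Fin.sum_univ_two] at hc
  refine ⟨c 0, c 1, vec_eq_of_dot fun x => ?_⟩
  have := congrFun (congrArg DFunLike.coe hc) x
  simp only [LinearMap.add_apply, LinearMap.smul_apply, Matrix.cons_val_zero,
    Matrix.cons_val_one, Matrix.head_cons, smul_eq_mul] at this
  rw [show hypl h x = h ⬝ᵥ x from rfl] at this
  rw [show hypl u x = u ⬝ᵥ x from rfl, show hypl w x = w ⬝ᵥ x from rfl] at this
  rw [add_dotProduct, smul_dotProduct, smul_dotProduct,
    smul_eq_mul, smul_eq_mul]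
  linarith [this]

lemma exists_dot_pos_neg {a b : V n} (ha : a ≠ 0) (hb : ∀ c : ℝ, b ≠ c • a) :
    ∃ x, 0 < a ⬝ᵥ x ∧ b ⬝ᵥ x < 0 := by
  have hnk : ¬ ∀ x, a ⬝ᵥ x = 0 → a ⬝ᵥ x = 0 → b ⬝ᵥ x = 0 := by
    intro h
    obtain ⟨s, t, hst⟩ := mem_span_pair_of_ker h
    exact hb (s + t) (by rw [hst, add_smul])
  push_neg at hnk
  obtain ⟨x₁, hax₁, -, hbx₁⟩ := hnk
  set y : V n := if b ⬝ᵥ x₁ < 0 then x₁ else -x₁ with hy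
  have hay : a ⬝ᵥ y = 0 := by
    rw [hy]; split
    · exact hax₁
    · rw [dotProduct_neg, hax₁, neg_zero]
  have hby : b ⬝ᵥ y < 0 := by
    rw [hy]
    rcases hbx₁.lt_or_gt with h | h
    · rw [if_pos h]; exact h
    · rw [if_neg (by linarith), dotProduct_neg]; linarith
  set ε : ℝ := (-(b ⬝ᵥ y)) / (2 * (|b ⬝ᵥ a| + 1)) with hε
  have hεpos : 0 < ε := by
    apply div_pos (by linarith) (by positivity)
  refine ⟨y + ε • a, ?_, ?_⟩
  · rw [dotProduct_add, dotProduct_smul, hay, smul_eq_mul, zero_add]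
    exact mul_pos hεpos (dot_self_pos ha)
  · rw [dotProduct_add, dotProduct_smul, smul_eq_mul]
    have h1 : ε * (b ⬝ᵥ a) ≤ ε * |b ⬝ᵥ a| := by
      apply mul_le_mul_of_nonneg_left (le_abs_self _) hεpos.le
    have h2 : ε * |b ⬝ᵥ a| < -(b ⬝ᵥ y) := by
      rw [hε, div_mul_eq_mul_div, div_lt_iff₀ (by positivity)]
      have habs : 0 ≤ |b ⬝ᵥ a| := abs_nonneg _
      nlinarith
    linarith

end Helpers

section Sep
variable {n : ℕ}

lemma exists_dot_pos_of_not_mem_hull {S : Finset (V n)}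
    (h : (0 : V n) ∉ convexHull ℝ (S : Set (V n))) : ∃ z, ∀ s ∈ S, 0 < s ⬝ᵥ z := by
  have hconv : Convex ℝ (convexHull ℝ (S : Set (V n))) := convex_convexHull _ _
  have hcl : IsClosed (convexHull ℝ (S : Set (V n))) :=
    (S.finite_toSet.isCompact_convexHull (𝕜 := ℝ)).isClosed
  obtain ⟨f, u, hu0, hub⟩ := geometric_hahn_banach_point_closed hconv hcl h
  refine ⟨fun i => f (Pi.single i 1), fun s hs => ?_⟩
  have h1 : f s = s ⬝ᵥ fun i => f (Pi.single i 1) := by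
    have hs' : s = ∑ i, Pi.single i (s i) := (Finset.univ_sum_single s).symm
    calc f s = f (∑ i, Pi.single i (s i)) := by rw [← hs']
      _ = ∑ i, f (Pi.single i (s i)) := map_sum f _ _
      _ = ∑ i, s i * f (Pi.single i 1) := by
            refine Finset.sum_congr rfl fun i _ => ?_
            have : (Pi.single i (s i) : V n) = s i • (Pi.single i (1:ℝ) : V n) := by
              rw [← Pi.single_smul, smul_eq_mul, mul_one]
            rw [this, _root_.map_smul, smul_eq_mul]
      _ = s ⬝ᵥ fun i => f (Pi.single i 1) := rfl
  have h2 := hub s (subset_convexHull ℝ _ hs)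
  have hf0 : f 0 = 0 := map_zero f
  rw [h1] at h2
  linarith [hu0, h2]

lemma caratheodory_plane {S : Finset (V n)} {W : Submodule ℝ (V n)}
    (hSW : ∀ s ∈ S, s ∈ W) (hW : Module.finrank ℝ W ≤ 2)
    (h0 : (0 : V n) ∈ convexHull ℝ (S : Set (V n))) :
    ∃ (k : ℕ) (z : Fin k → V n) (c : Fin k → ℝ), k ≤ 3 ∧ Function.Injective z ∧
      (∀ i, z i ∈ S) ∧ (∀ i, 0 < c i) ∧ ∑ i, c i = 1 ∧ ∑ i, c i • z i = 0 := by
  obtain ⟨ι, hft, z, c, hrange, hai, hpos, hsum1, hsum0⟩ :=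
    eq_pos_convex_span_of_mem_convexHull h0
  have hcard : Fintype.card ι ≤ 3 := by
    have h1 := hai.card_le_finrank_succ
    have h2 : vectorSpan ℝ (Set.range z) ≤ W := by
      apply Submodule.span_le.2
      rintro d hd
      rw [Set.mem_vsub] at hd
      obtain ⟨p, hp, q, hq, rfl⟩ := hd
      rw [vsub_eq_sub]
      exact W.sub_mem (hSW _ (hrange hp)) (hSW _ (hrange hq))
    have h3 : Module.finrank ℝ (vectorSpan ℝ (Set.range z)) ≤ Module.finrank ℝ W :=
      Submodule.finrank_mono h2
    exact h1.trans (Nat.add_le_add_right (h3.trans hW) 1)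
  let e := (Fintype.equivFin ι).symm
  refine ⟨Fintype.card ι, z ∘ e, c ∘ e, hcard, hai.injective.comp e.injective,
    fun i => hrange ⟨e i, rfl⟩, fun i => hpos _, ?_, ?_⟩
  · rw [show ∑ i, (c ∘ e) i = ∑ i, c (e i) from rfl, Equiv.sum_comp e c]
    exact hsum1
  · rw [show ∑ i, (c ∘ e) i • (z ∘ e) i = ∑ i, (fun j => c j • z j) (e i) from rfl,
      Equiv.sum_comp e (fun j => c j • z j)]
    exact hsum0

end Sep

section Circuit
variable {n : ℕ}

lemma smul_shift {c : ℝ} (hc : c ≠ 0) {a b : V n} (h : c • a = b) : a = c⁻¹ • b := by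
  rw [← h, inv_smul_smul₀ hc]

lemma circuit_exists {A : Finset (V n)} (hA : IsArrangement A) {I : Finset (V n)} (hIA : I ⊆ A)
    {x₀ : V n} (hx₀ : ∀ h ∈ A, 0 < h ⬝ᵥ x₀)
    {h₁ h₂ H : V n} (h1I : h₁ ∈ I) (h2I : h₂ ∈ I) (hne : h₁ ≠ h₂)
    (hHA : H ∈ A) (hHI : H ∉ I) {α β : ℝ} (hα : 0 < α) (hβ : 0 < β)
    (hH : H = α • h₁ + β • h₂) :
    ∃ v : V n → SignType, IsCircuit A v ∧
      {h | v h = 1}.ncard = 2 ∧ {h | v h = -1}.ncard = 1 ∧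
      {h | v h = 1} ⊆ (I : Set (V n)) ∧
      {h | v h = -1} ⊆ ((A \ I : Finset (V n)) : Set (V n)) := by
  have h1A : h₁ ∈ A := hIA h1I
  have h2A : h₂ ∈ A := hIA h2I
  have hH1 : H ≠ h₁ := fun h => hHI (h ▸ h1I)
  have hH2 : H ≠ h₂ := fun h => hHI (h ▸ h2I)
  have h1ne : h₁ ≠ (0 : V n) := hA.1 h₁ h1A
  have h2ne : h₂ ≠ (0 : V n) := hA.1 h₂ h2A
  have hprop12 : ∀ c : ℝ, h₂ ≠ c • h₁ := not_prop hA h1A h2A hne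
  have hprop21 : ∀ c : ℝ, h₁ ≠ c • h₂ := not_prop hA h2A h1A hne.symm
  have hpropH1 : ∀ c : ℝ, H ≠ c • h₁ := by
    intro c hc
    apply hprop12 (β⁻¹ * (c - α))
    have h1 : β • h₂ = (c - α) • h₁ := by
      rw [hH] at hc
      rw [sub_smul, ← hc]; abel
    rw [smul_shift (ne_of_gt hβ) h1, smul_smul]
  have hpropH2 : ∀ c : ℝ, H ≠ c • h₂ := by
    intro c hc
    apply hprop21 (α⁻¹ * (c - β))
    have h1 : α • h₁ = (c - β) • h₂ := by
      rw [hH] at hc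
      rw [sub_smul, ← hc]; abel
    rw [smul_shift (ne_of_gt hα) h1, smul_smul]
  set v : V n → SignType := fun h => if h = h₁ ∨ h = h₂ then 1 else if h = H then -1 else 0
    with hv
  have hv1 : ∀ h, v h = 1 ↔ (h = h₁ ∨ h = h₂) := by
    intro h
    simp only [hv]
    by_cases h12 : h = h₁ ∨ h = h₂
    · rw [if_pos h12]; exact iff_of_true rfl h12
    · rw [if_neg h12]
      by_cases hh : h = H
      · rw [if_pos hh]; exact iff_of_false (by decide) h12
      · rw [if_neg hh]; exact iff_of_false (by decide) h12
  have hvm1 : ∀ h, v h = -1 ↔ h = H := by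
    intro h
    simp only [hv]
    by_cases h12 : h = h₁ ∨ h = h₂
    · rw [if_pos h12]
      refine iff_of_false (by decide) (fun hh => ?_)
      rcases h12 with rfl | rfl
      · exact hH1 hh.symm
      · exact hH2 hh.symm
    · rw [if_neg h12]
      by_cases hh : h = H
      · rw [if_pos hh]; exact iff_of_true rfl hh
      · rw [if_neg hh]; exact iff_of_false (by decide) hh
  have hv0 : ∀ h, v h ≠ 0 ↔ (h = h₁ ∨ h = h₂ ∨ h = H) := by
    intro h
    simp only [hv]
    by_cases h12 : h = h₁ ∨ h = h₂
    · rw [if_pos h12]; exact iff_of_true (by decide) (by tauto)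
    · rw [if_neg h12]
      by_cases hh : h = H
      · rw [if_pos hh]; exact iff_of_true (by decide) (Or.inr (Or.inr hh))
      · rw [if_neg hh]; exact iff_of_false (by simp) (by tauto)
  have hHdot : ∀ x, H ⬝ᵥ x = α * (h₁ ⬝ᵥ x) + β * (h₂ ⬝ᵥ x) := by
    intro x
    rw [hH, add_dotProduct, smul_dotProduct, smul_dotProduct,
      smul_eq_mul, smul_eq_mul]
  refine ⟨v, ⟨?_, ⟨h₁, ?_⟩, ?_, ?_⟩, ?_, ?_, ?_, ?_⟩
  · -- support in A
    intro h hh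
    rcases (hv0 h).1 hh with rfl | rfl | rfl <;> assumption
  · rw [hv0 h₁]; left; rfl
  · -- not feasible
    rintro ⟨x, hx⟩
    have hx1 : 0 < h₁ ⬝ᵥ x := (hx h₁ h1A).1 ((hv1 h₁).2 (Or.inl rfl))
    have hx2 : 0 < h₂ ⬝ᵥ x := (hx h₂ h2A).1 ((hv1 h₂).2 (Or.inr rfl))
    have hxH : H ⬝ᵥ x < 0 := (hx H hHA).2 ((hvm1 H).2 rfl)
    rw [hHdot] at hxH
    nlinarith
  · -- minimality
    intro w hagree hsub
    have hwsupp : {h | w h ≠ 0} ⊆ {h | h = h₁ ∨ h = h₂ ∨ h = H} := by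
      intro h hh
      have hh' : w h ≠ 0 := hh
      exact (hv0 h).1 (by rw [← hagree h hh']; exact hh')
    have hw1 : ∀ h, w h = 1 → (h = h₁ ∨ h = h₂) := by
      intro h hh
      have hne0 : w h ≠ 0 := by rw [hh]; decide
      have := hagree h hne0
      rw [hh] at this
      exact (hv1 h).1 this.symm
    have hwm1 : ∀ h, w h = -1 → h = H := by
      intro h hh
      have hne0 : w h ≠ 0 := by rw [hh]; decide
      have := hagree h hne0
      rw [hh] at this
      exact (hvm1 h).1 this.symm
    have hmiss : ∃ a ∈ ({h₁, h₂, H} : Set (V n)), w a = 0 := by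
      by_contra hcon
      push_neg at hcon
      have : {h | v h ≠ 0} ⊆ {h | w h ≠ 0} := by
        intro h hh
        rcases (hv0 h).1 hh with heq | heq | heq <;> rw [heq]
        · exact hcon h₁ (by simp)
        · exact hcon h₂ (by simp)
        · exact hcon H (by simp)
      exact hsub.2 this
    obtain ⟨a, ha, hwa⟩ := hmiss
    have hfeas : ∀ x : V n, (∀ h ∈ A, w h = 1 → 0 < h ⬝ᵥ x) →
        (∀ h ∈ A, w h = -1 → h ⬝ᵥ x < 0) → Feasible A w := by
      intro x hp hm
      exact ⟨x, fun h hh => ⟨hp h hh, hm h hh⟩⟩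
    simp only [Set.mem_insert_iff, Set.mem_singleton_iff] at ha
    rcases ha with rfl | rfl | rfl
    · -- a = h₁ missing
      obtain ⟨x, hx2, hxH⟩ := exists_dot_pos_neg h2ne hpropH2
      refine hfeas x (fun h hh h1 => ?_) (fun h hh hm1 => ?_)
      · rcases hw1 h h1 with heq | heq
        · rw [heq, hwa] at h1; exact absurd h1 (by decide)
        · rw [heq]; exact hx2
      · rw [hwm1 h hm1]; exact hxH
    · -- a = h₂ missing
      obtain ⟨x, hx1, hxH⟩ := exists_dot_pos_neg h1ne hpropH1
      refine hfeas x (fun h hh h1 => ?_) (fun h hh hm1 => ?_)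
      · rcases hw1 h h1 with heq | heq
        · rw [heq]; exact hx1
        · rw [heq, hwa] at h1; exact absurd h1 (by decide)
      · rw [hwm1 h hm1]; exact hxH
    · -- a = H missing
      refine hfeas x₀ (fun h hh _ => hx₀ h hh) (fun h hh hm1 => ?_)
      have hEq := hwm1 h hm1
      rw [hEq, hwa] at hm1
      exact absurd hm1 (by decide)
  · rw [show {h | v h = 1} = {h₁, h₂} from Set.ext fun h => by
      simp only [Set.mem_setOf_eq, Set.mem_insert_iff, Set.mem_singleton_iff, hv1 h]]
    exact Set.ncard_pair hne
  · rw [show {h | v h = -1} = {H} from Set.ext fun h => by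
      simp only [Set.mem_setOf_eq, Set.mem_singleton_iff, hvm1 h]]
    exact Set.ncard_singleton H
  · intro h hh
    rcases (hv1 h).1 hh with heq | heq <;> rw [heq]
    · exact h1I
    · exact h2I
  · intro h hh
    have heq : h = H := (hvm1 h).1 hh
    rw [heq]
    simp only [Finset.coe_sdiff, Set.mem_diff, Finset.mem_coe]
    exact ⟨hHA, hHI⟩

end Circuit

theorem twoClosed_iff_no_small_circuit {n : ℕ} (A : Finset (V n)) (hA : IsArrangement A)
    (hc₀ : IsChamber A (fun _ => true)) (I : Finset (V n)) (hIA : I ⊆ A) :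
    Is2Closed A (fun _ => true) I ↔
      ¬ ∃ v : V n → SignType, IsCircuit A v ∧
        {h | v h = 1}.ncard = 2 ∧ {h | v h = -1}.ncard = 1 ∧
        {h | v h = 1} ⊆ (I : Set (V n)) ∧
        {h | v h = -1} ⊆ ((A \ I : Finset (V n)) : Set (V n)) := by
  obtain ⟨x₀, hx₀⟩ := hc₀
  have hx₀' : ∀ h ∈ A, 0 < h ⬝ᵥ x₀ := by
    intro h hh
    have := hx₀ h hh
    simpa using this
  constructor
  · -- 2-closed implies no small circuit
    intro h2c hex
    obtain ⟨v, hcirc, hc2, hc1, hposI, hnegAI⟩ := hex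
    obtain ⟨h₁, h₂, hne, hset1⟩ := Set.ncard_eq_two.1 hc2
    obtain ⟨h₃, hset3⟩ := Set.ncard_eq_one.1 hc1
    have h1mem : h₁ ∈ {h | v h = 1} := by rw [hset1]; exact Or.inl rfl
    have h2mem : h₂ ∈ {h | v h = 1} := by rw [hset1]; exact Or.inr rfl
    have h3mem : h₃ ∈ {h | v h = -1} := by rw [hset3]; rfl
    have h1I : h₁ ∈ I := hposI h1mem
    have h2I : h₂ ∈ I := hposI h2mem
    have h3AI : h₃ ∈ A \ I := by
      have := hnegAI h3mem
      simpa using this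
    obtain ⟨h3A, h3I⟩ := Finset.mem_sdiff.1 h3AI
    have h1A : h₁ ∈ A := hIA h1I
    have h2A : h₂ ∈ A := hIA h2I
    have h1ne0 : h₁ ≠ (0 : V n) := hA.1 _ h1A
    have hv1 : ∀ h, v h = 1 → h = h₁ ∨ h = h₂ := by
      intro h hh
      have hmem : h ∈ {h | v h = 1} := hh
      rwa [hset1] at hmem
    have hvm1 : ∀ h, v h = -1 → h = h₃ := by
      intro h hh
      have hmem : h ∈ {h | v h = -1} := hh
      rwa [hset3] at hmem
    have hprop12 : ∀ c : ℝ, h₂ ≠ c • h₁ := not_prop hA h1A h2A hne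
    have hindep : LinearIndependent ℝ ![h₁, h₂] := by
      rw [LinearIndependent.pair_iff]
      intro s t hst
      by_cases ht : t = 0
      · subst ht
        rw [zero_smul, add_zero] at hst
        exact ⟨(smul_eq_zero.1 hst).resolve_right h1ne0, rfl⟩
      · exfalso
        apply hprop12 (t⁻¹ * (-s))
        have h1 : t • h₂ = (-s) • h₁ := by
          rw [neg_smul]
          exact eq_neg_of_add_eq_zero_right hst
        rw [smul_shift ht h1, smul_smul]
    have hspan : ∃ a b : ℝ, h₃ = a • h₁ + b • h₂ := by
      by_contra hcon
      have hker : ¬ ∀ x, h₁ ⬝ᵥ x = 0 → h₂ ⬝ᵥ x = 0 → h₃ ⬝ᵥ x = 0 :=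
        fun h => hcon (mem_span_pair_of_ker h)
      push_neg at hker
      obtain ⟨x₁, hk1, hk2, hk3⟩ := hker
      set q : ℝ := (-1 - h₃ ⬝ᵥ x₀) / (h₃ ⬝ᵥ x₁) with hq
      refine hcirc.2.2.1 ⟨x₀ + q • x₁, fun h hh => ⟨fun hEq => ?_, fun hEq => ?_⟩⟩
      · rcases hv1 h hEq with heq | heq <;> rw [heq] <;>
          rw [dotProduct_add, dotProduct_smul, smul_eq_mul]
        · rw [hk1, mul_zero, add_zero]; exact hx₀' h₁ h1A
        · rw [hk2, mul_zero, add_zero]; exact hx₀' h₂ h2A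
      · rw [hvm1 h hEq, dotProduct_add, dotProduct_smul, smul_eq_mul, hq,
          div_mul_cancel₀ _ hk3]
        linarith
    obtain ⟨a, b, hab⟩ := hspan
    have hcodim : Codim2 A h₁ h₂ := ⟨h1A, h2A, hindep⟩
    have loc1 : h₁ ∈ loc A h₁ h₂ := Finset.mem_filter.2 ⟨h1A, fun x hx _ => hx⟩
    have loc2 : h₂ ∈ loc A h₁ h₂ := Finset.mem_filter.2 ⟨h2A, fun x _ hx => hx⟩
    have loc3 : h₃ ∈ loc A h₁ h₂ := Finset.mem_filter.2 ⟨h3A, fun x hx hx' => by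
      rw [hab, add_dotProduct, smul_dotProduct, smul_dotProduct, hx, hx']
      simp⟩
    obtain ⟨e, ⟨x, hx⟩, hsep3, hsepsub⟩ := h2c h₁ h₂ hcodim h₃
      (Finset.mem_sdiff.2 ⟨loc3, fun hmem => h3I (Finset.mem_inter.1 hmem).1⟩)
    have he1 : e h₁ = true := by
      by_contra hcon
      have hmem : h₁ ∈ SepSet (loc A h₁ h₂) (fun _ => true) e :=
        Finset.mem_filter.2 ⟨loc1, fun h => hcon h.symm⟩
      exact (Finset.mem_sdiff.1 (hsepsub hmem)).2 (Finset.mem_inter.2 ⟨h1I, loc1⟩)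
    have he2 : e h₂ = true := by
      by_contra hcon
      have hmem : h₂ ∈ SepSet (loc A h₁ h₂) (fun _ => true) e :=
        Finset.mem_filter.2 ⟨loc2, fun h => hcon h.symm⟩
      exact (Finset.mem_sdiff.1 (hsepsub hmem)).2 (Finset.mem_inter.2 ⟨h2I, loc2⟩)
    have he3 : e h₃ = false := by
      have hne3 : (fun _ : V n => true) h₃ ≠ e h₃ := (Finset.mem_filter.1 hsep3).2
      cases hc3 : e h₃
      · rfl
      · exact absurd hc3.symm hne3
    have hd1 : 0 < h₁ ⬝ᵥ x := by simpa [he1] using hx h₁ loc1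
    have hd2 : 0 < h₂ ⬝ᵥ x := by simpa [he2] using hx h₂ loc2
    have hd3 : h₃ ⬝ᵥ x < 0 := by simpa [he3] using hx h₃ loc3
    refine hcirc.2.2.1 ⟨x, fun h hh => ⟨fun hEq => ?_, fun hEq => ?_⟩⟩
    · rcases hv1 h hEq with heq | heq <;> rw [heq]
      · exact hd1
      · exact hd2
    · rw [hvm1 h hEq]; exact hd3
  · -- no small circuit implies 2-closed
    intro hnc u w hcodim H hH
    have hLsub : loc A u w ⊆ A := Finset.filter_subset _ _
    obtain ⟨hHL, hHIL⟩ := Finset.mem_sdiff.1 hH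
    have hHA : H ∈ A := hLsub hHL
    have hHI : H ∉ I := fun h => hHIL (Finset.mem_inter.2 ⟨h, hHL⟩)
    have hHne0 : H ≠ (0 : V n) := hA.1 _ hHA
    set S : Finset (V n) := insert (-H) (I ∩ loc A u w) with hS
    have hLW : ∀ g ∈ loc A u w, ∃ a b : ℝ, g = a • u + b • w := fun g hg =>
      mem_span_pair_of_ker (Finset.mem_filter.1 hg).2
    by_cases h0 : (0 : V n) ∈ convexHull ℝ (S : Set (V n))
    · exfalso
      have hSW : ∀ s ∈ S, s ∈ Submodule.span ℝ ({u, w} : Set (V n)) := by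
        intro s hs
        rcases Finset.mem_insert.1 hs with rfl | hs'
        · obtain ⟨a, b, hab⟩ := hLW H hHL
          exact Submodule.neg_mem _ (Submodule.mem_span_pair.2 ⟨a, b, hab.symm⟩)
        · obtain ⟨a, b, hab⟩ := hLW s (Finset.mem_inter.1 hs').2
          exact Submodule.mem_span_pair.2 ⟨a, b, hab.symm⟩
      have hWr : Module.finrank ℝ (Submodule.span ℝ ({u, w} : Set (V n))) ≤ 2 := by
        have h1 : ({u, w} : Set (V n)) = (({u, w} : Finset (V n)) : Set (V n)) := by simp
        rw [h1]
        refine le_trans (finrank_span_finset_le_card _) ?_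
        exact le_trans (Finset.card_insert_le _ _) (by simp)
      obtain ⟨k, z, c, hk, hinj, hzS, hcpos, hsum1, hsum0⟩ := caratheodory_plane hSW hWr h0
      by_cases hex : ∃ i, z i = -H
      · obtain ⟨i₀, hi₀⟩ := hex
        have hRmem : ∀ i ∈ Finset.univ.erase i₀, z i ∈ I ∩ loc A u w := by
          intro i hi
          rcases Finset.mem_insert.1 (hzS i) with heq | h'
          · exact absurd (hinj (heq.trans hi₀.symm)) (Finset.mem_erase.1 hi).1
          · exact h'
        have hci₀ : (0 : ℝ) < c i₀ := hcpos i₀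
        have hkey : c i₀ • H = ∑ i ∈ Finset.univ.erase i₀, c i • z i := by
          have h1 := hsum0
          rw [← Finset.add_sum_erase _ _ (Finset.mem_univ i₀), hi₀, smul_neg] at h1
          rwa [neg_add_eq_zero] at h1
        have hRcard : (Finset.univ.erase i₀).card ≤ 2 := by
          rw [Finset.card_erase_of_mem (Finset.mem_univ _), Finset.card_univ,
            Fintype.card_fin]
          omega
        rcases hcc : (Finset.univ.erase i₀).card with _ | _ | _ | m
        · rw [Finset.card_eq_zero] at hcc
          rw [hcc, Finset.sum_empty] at hkey
          exact hHne0 ((smul_eq_zero.1 hkey).resolve_left (ne_of_gt hci₀))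
        · rw [Finset.card_eq_one] at hcc
          obtain ⟨j, hj⟩ := hcc
          have hjR : j ∈ Finset.univ.erase i₀ := by rw [hj]; exact Finset.mem_singleton_self j
          rw [hj, Finset.sum_singleton] at hkey
          obtain ⟨hjI, hjL⟩ := Finset.mem_inter.1 (hRmem j hjR)
          have hzjA : z j ∈ A := hIA hjI
          have hHzj : z j ≠ H := fun h => hHI (h ▸ hjI)
          apply not_prop hA hzjA hHA hHzj ((c i₀)⁻¹ * c j)
          rw [← smul_smul]
          exact smul_shift (ne_of_gt hci₀) hkey
        · rw [Finset.card_eq_two] at hcc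
          obtain ⟨j, l, hjl, hjlR⟩ := hcc
          have hjR : j ∈ Finset.univ.erase i₀ := by rw [hjlR]; simp
          have hlR : l ∈ Finset.univ.erase i₀ := by rw [hjlR]; simp
          rw [hjlR, Finset.sum_pair hjl] at hkey
          obtain ⟨hjI, hjL⟩ := Finset.mem_inter.1 (hRmem j hjR)
          obtain ⟨hlI, hlL⟩ := Finset.mem_inter.1 (hRmem l hlR)
          have hzjl : z j ≠ z l := fun h => hjl (hinj h)
          have hHeq : H = ((c i₀)⁻¹ * c j) • z j + ((c i₀)⁻¹ * c l) • z l := by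
            have h1 := smul_shift (ne_of_gt hci₀) hkey
            rw [h1, smul_add, smul_smul, smul_smul]
          exact hnc (circuit_exists hA hIA hx₀' hjI hlI hzjl hHA hHI
            (mul_pos (inv_pos.2 hci₀) (hcpos j)) (mul_pos (inv_pos.2 hci₀) (hcpos l)) hHeq)
        · omega
      · push_neg at hex
        have hmem : ∀ i, z i ∈ I ∩ loc A u w := fun i =>
          (Finset.mem_insert.1 (hzS i)).resolve_left (hex i)
        have hneu : (Finset.univ : Finset (Fin k)).Nonempty := by
          rcases Nat.eq_zero_or_pos k with rfl | hpos
          · simp at hsum1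
          · exact ⟨⟨0, hpos⟩, Finset.mem_univ _⟩
        have h1 : (∑ i, c i • z i) ⬝ᵥ x₀ = 0 := by rw [hsum0, zero_dotProduct]
        rw [sum_dot] at h1
        have h2 : 0 < ∑ i, (c i • z i) ⬝ᵥ x₀ := by
          apply Finset.sum_pos _ hneu
          intro i _
          rw [smul_dotProduct, smul_eq_mul]
          exact mul_pos (hcpos i) (hx₀' _ (hIA (Finset.mem_inter.1 (hmem i)).1))
        linarith
    · obtain ⟨z, hz⟩ := exists_dot_pos_of_not_mem_hull h0
      have hzI : ∀ h ∈ I ∩ loc A u w, 0 < h ⬝ᵥ z := fun h hh =>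
        hz h (Finset.mem_insert_of_mem hh)
      have hzH : H ⬝ᵥ z < 0 := by
        have := hz _ (Finset.mem_insert_self _ _)
        rwa [neg_dotProduct, neg_pos] at this
      set B := (loc A u w).filter (fun g => g ⬝ᵥ z < 0) with hB
      set T := insert (1 : ℝ) (B.image fun g => (-(g ⬝ᵥ z)) / (g ⬝ᵥ x₀)) with hT
      have hTne : T.Nonempty := ⟨1, Finset.mem_insert_self _ _⟩
      have hTpos : ∀ t ∈ T, 0 < t := by
        intro t ht
        rcases Finset.mem_insert.1 ht with rfl | ht'
        · exact one_pos
        · obtain ⟨g, hg, rfl⟩ := Finset.mem_image.1 ht'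
          obtain ⟨hgL, hgz⟩ := Finset.mem_filter.1 hg
          exact div_pos (by linarith) (hx₀' g (hLsub hgL))
      set ε := T.min' hTne / 2 with hε
      have hεpos : 0 < ε := by
        have := hTpos _ (T.min'_mem hTne)
        rw [hε]; linarith
      have hεlt : ∀ g ∈ B, g ⬝ᵥ z + ε * (g ⬝ᵥ x₀) < 0 := by
        intro g hg
        obtain ⟨hgL, hgz⟩ := Finset.mem_filter.1 hg
        have hgx : 0 < g ⬝ᵥ x₀ := hx₀' g (hLsub hgL)
        have hmemT : (-(g ⬝ᵥ z)) / (g ⬝ᵥ x₀) ∈ T :=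
          Finset.mem_insert_of_mem (Finset.mem_image.2 ⟨g, hg, rfl⟩)
        have h2 : ε < (-(g ⬝ᵥ z)) / (g ⬝ᵥ x₀) := by
          have hmle := T.min'_le _ hmemT
          have := hTpos _ (T.min'_mem hTne)
          rw [hε]; linarith
        have h3 : ε * (g ⬝ᵥ x₀) < -(g ⬝ᵥ z) := (lt_div_iff₀ hgx).1 h2
        linarith
      set z' := z + ε • x₀ with hz'
      have hdot : ∀ g : V n, g ⬝ᵥ z' = g ⬝ᵥ z + ε * (g ⬝ᵥ x₀) := by
        intro g
        rw [hz', dotProduct_add, dotProduct_smul, smul_eq_mul]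
      have hpos2 : ∀ g ∈ loc A u w, 0 ≤ g ⬝ᵥ z → 0 < g ⬝ᵥ z' := by
        intro g hg hgz
        rw [hdot]
        have := hx₀' g (hLsub hg)
        nlinarith
      have hneg2 : ∀ g ∈ loc A u w, g ⬝ᵥ z < 0 → g ⬝ᵥ z' < 0 := by
        intro g hg hgz
        rw [hdot]
        exact hεlt g (Finset.mem_filter.2 ⟨hg, hgz⟩)
      refine ⟨fun g => decide (0 < g ⬝ᵥ z'), ⟨z', ?_⟩, ?_, ?_⟩
      · intro g hg
        by_cases hgz : g ⬝ᵥ z < 0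
        · have h1 : g ⬝ᵥ z' < 0 := hneg2 g hg hgz
          have hd : decide (0 < g ⬝ᵥ z') = false := decide_eq_false (by linarith)
          simpa [hd] using h1
        · have h1 : 0 < g ⬝ᵥ z' := hpos2 g hg (not_lt.1 hgz)
          have hd : decide (0 < g ⬝ᵥ z') = true := decide_eq_true h1
          simpa [hd] using h1
      · refine Finset.mem_filter.2 ⟨hHL, ?_⟩
        have h1 : H ⬝ᵥ z' < 0 := hneg2 H hHL hzH
        have hd : decide (0 < H ⬝ᵥ z') = false := decide_eq_false (by linarith)
        simp [hd]
      · intro g hg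
        obtain ⟨hgL, hgne⟩ := Finset.mem_filter.1 hg
        rw [Finset.mem_sdiff]
        refine ⟨hgL, fun hmem => ?_⟩
        have h1 : 0 < g ⬝ᵥ z := hzI g hmem
        have h2 : 0 < g ⬝ᵥ z' := hpos2 g hgL h1.le
        exact hgne (decide_eq_true h2).symm
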